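/- arXiv:1004.2753 — 3 statements merged into one kernel-verified Lean document; each statement's English description precedes it below -/
import Mathlib

section
/- For every integer m ≥ 2, the sum ∑_{r=0}^{m} (-1)^r * C(m,r) * C(m+r,r) / ((r+1)(m+r)) equals 0. -/
lemma aux_stmt0 (M R a a' b c : ℚ) (h1 : a' * (R + 1) = a * (M - R))
    (h2 : c * (M + R) = b * R) (hR1 : (R : ℚ) + 1 ≠ 0) (hMR : M + R ≠ 0)
    (hM : M ≠ 0) (hM1 : M ^ 2 - 1 ≠ 0) :
    a * b / ((R + 1) * (M + R)) =
      a' * b * (M ^ 2 - (R + 1)) / (M ^ 2 * (M ^ 2 - 1)) +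
        a * c * (M ^ 2 - R) / (M ^ 2 * (M ^ 2 - 1)) := by
  field_simp
  linear_combination (-1:ℚ) * b * (M ^ 2 - R - 1) * (M + R) * h1 +
    (-1:ℚ) * a * (M ^ 2 - R) * (R + 1) * h2

theorem stmt_0 (m : ℕ) (hm : 2 ≤ m) :
    ∑ r ∈ Finset.range (m + 1),
      ((-1 : ℚ) ^ r * (m.choose r) * ((m + r).choose r)) / ((r + 1) * (m + r)) = 0 := by
  have hm2 : (2 : ℚ) ≤ (m : ℚ) := by exact_mod_cast hm
  have hM : (m : ℚ) ≠ 0 := by linarith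
  have hM1 : (m : ℚ) ^ 2 - 1 ≠ 0 := by nlinarith
  set g : ℕ → ℚ := fun k =>
    (-1) ^ (k + 1) * (m.choose k) * ((m + k - 1).choose m) * ((m : ℚ) ^ 2 - k) /
      ((m : ℚ) ^ 2 * ((m : ℚ) ^ 2 - 1)) with hg
  have key : ∀ r ∈ Finset.range (m + 1),
      ((-1 : ℚ) ^ r * (m.choose r) * ((m + r).choose r)) / ((r + 1) * (m + r)) =
        g (r + 1) - g r := by
    intro r hr
    rw [Finset.mem_range] at hr
    have hrm : r ≤ m := Nat.lt_succ_iff.mp hr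
    -- nat identities
    have n1 : m.choose (r + 1) * (r + 1) = m.choose r * (m - r) :=
      Nat.choose_succ_right_eq m r
    have n2 : (m + r - 1).choose m * (m + r) = (m + r).choose m * r := by
      have h3 := Nat.add_one_mul_choose_eq (m + r - 1) m
      have e1 : m + r - 1 + 1 = m + r := by omega
      rw [e1] at h3
      have e2 : (m + r).choose (m + 1) * (m + 1) = (m + r).choose m * (m + r - m) :=
        Nat.choose_succ_right_eq (m + r) m
      have e3 : m + r - m = r := by omega
      rw [e3] at e2
      -- h3 : (m + r) * (m + r - 1).choose m = (m + r).choose (m + 1) * (m + 1)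
      rw [mul_comm ((m + r - 1).choose m) (m + r), h3]
      exact e2
    have q1 : ((m.choose (r + 1) : ℚ)) * ((r : ℚ) + 1) =
        (m.choose r : ℚ) * ((m : ℚ) - r) := by
      have := congrArg (fun x : ℕ => (x : ℚ)) n1
      push_cast [Nat.cast_sub hrm] at this
      linarith [this]
    have q2 : (((m + r - 1).choose m : ℚ)) * ((m : ℚ) + r) =
        ((m + r).choose m : ℚ) * r := by
      have := congrArg (fun x : ℕ => (x : ℚ)) n2
      push_cast at this
      linarith [this]
    have hsymm : (m + r).choose r = (m + r).choose m := by
      rw [← Nat.choose_symm (by omega : m ≤ m + r)]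
      congr 1
      omega
    have hR1 : (r : ℚ) + 1 ≠ 0 := by positivity
    have hMR : (m : ℚ) + r ≠ 0 := by positivity
    have main := aux_stmt0 (m : ℚ) (r : ℚ) (m.choose r : ℚ) (m.choose (r + 1) : ℚ)
      ((m + r).choose m : ℚ) ((m + r - 1).choose m : ℚ) q1 q2 hR1 hMR hM hM1
    have eg1 : g (r + 1) = (-1) ^ r * (m.choose (r + 1)) * ((m + r).choose m) *
        ((m : ℚ) ^ 2 - ((r : ℚ) + 1)) / ((m : ℚ) ^ 2 * ((m : ℚ) ^ 2 - 1)) := by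
      rw [hg]
      have e4 : m + (r + 1) - 1 = m + r := by omega
      simp only [e4]
      push_cast
      ring
    have eg2 : g r = (-1) ^ (r + 1) * (m.choose r) * ((m + r - 1).choose m) *
        ((m : ℚ) ^ 2 - (r : ℚ)) / ((m : ℚ) ^ 2 * ((m : ℚ) ^ 2 - 1)) := rfl
    rw [eg1, eg2, hsymm]
    linear_combination ((-1:ℚ) ^ r) * main
  rw [Finset.sum_congr rfl key, Finset.sum_range_sub]
  have hz1 : m.choose (m + 1) = 0 := Nat.choose_eq_zero_of_lt (by omega)
  have hz2 : (m + 0 - 1).choose m = 0 := Nat.choose_eq_zero_of_lt (by omega)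
  have hz3 : (m - 1).choose m = 0 := Nat.choose_eq_zero_of_lt (by omega)
  rw [hg]
  simp [hz1, hz2, hz3]
end

section
/- For nonnegative integers ℓ, m, s, n: ∑_{k} (-1)^k * C(ℓ, m+k) * C(s+k, n) = (-1)^{ℓ+m} * C(s-m, n-ℓ), where the right-hand generalized binomial coefficient is interpreted via the polynomial extension (in particular it is 0 if n-ℓ < 0, and defined by the falling factorial formula for negative upper entry). -/
/-- Generalized binomial coefficient `C(x, k)` for integer upper argument `x`
    and integer lower argument `k`, defined by the falling-factorial formula for
    `k ≥ 0` and equal to `0` for `k < 0`. -/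
def gchoose (x : ℤ) (k : ℤ) : ℚ :=
  if k < 0 then 0
  else (∏ j ∈ Finset.range k.toNat, ((x : ℚ) - (j : ℚ))) / (Nat.factorial k.toNat)

noncomputable def B (x : ℚ) (k : ℕ) : ℚ :=
  (∏ j ∈ Finset.range k, (x - j)) / (Nat.factorial k)

lemma B_pascal (x : ℚ) (k : ℕ) : B (x + 1) (k + 1) - B x (k + 1) = B x k := by
  unfold B
  rw [Finset.prod_range_succ (fun j => x - (j:ℚ)), Finset.prod_range_succ' (fun j => x + 1 - (j:ℚ))]
  have h1 : (∏ j ∈ Finset.range k, (x + 1 - ((j:ℕ)+1 : ℕ))) = ∏ j ∈ Finset.range k, (x - j) := by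
    apply Finset.prod_congr rfl
    intro j _
    push_cast
    ring
  rw [h1, Nat.factorial_succ]
  have h2 : ((k+1 : ℕ) : ℚ) ≠ 0 := by positivity
  have h3 : ((Nat.factorial k : ℕ) : ℚ) ≠ 0 := by
    exact_mod_cast Nat.cast_ne_zero.mpr (Nat.factorial_ne_zero k)
  push_cast
  field_simp
  ring

lemma key (n : ℕ) : ∀ (ℓ : ℕ) (x : ℚ),
    ∑ j ∈ Finset.range (ℓ + 1), (-1 : ℚ) ^ j * (ℓ.choose j) * B (x + j) n
      = (-1 : ℚ) ^ ℓ * (if ℓ ≤ n then B x (n - ℓ) else 0) := by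
  intro ℓ
  induction ℓ with
  | zero => intro x; simp
  | succ ℓ ih =>
    intro x
    set g : ℕ → ℚ := fun j => (-1 : ℚ) ^ j * (ℓ.choose j) * B (x + j) n with hg
    have hterm : ∀ i : ℕ, (-1 : ℚ) ^ (i+1) * ((ℓ+1).choose (i+1)) * B (x + ((i+1 : ℕ) : ℚ)) n
        = g (i+1) - (-1 : ℚ) ^ i * (ℓ.choose i) * B ((x+1) + i) n := by
      intro i
      simp only [hg]
      rw [Nat.choose_succ_succ]
      push_cast
      rw [show x + ((i:ℚ)+1) = (x+1) + (i:ℚ) from by ring]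
      ring
    have hsplit :
        ∑ j ∈ Finset.range (ℓ + 1 + 1), (-1 : ℚ) ^ j * ((ℓ+1).choose j) * B (x + j) n
          = (∑ j ∈ Finset.range (ℓ + 1), g j)
            - ∑ j ∈ Finset.range (ℓ + 1), (-1 : ℚ) ^ j * (ℓ.choose j) * B ((x+1) + j) n := by
      rw [Finset.sum_range_succ' (fun j => (-1 : ℚ) ^ j * ((ℓ+1).choose j) * B (x + j) n) (ℓ+1)]
      rw [Finset.sum_congr rfl (fun i _ => hterm i), Finset.sum_sub_distrib]
      have hlast : ∑ i ∈ Finset.range (ℓ+1), g (i+1)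
          = (∑ j ∈ Finset.range (ℓ+1+1), g j) - g 0 := by
        rw [Finset.sum_range_succ' g (ℓ+1)]; ring
      have hz : g (ℓ+1) = 0 := by
        simp [hg, Nat.choose_succ_self]
      have h0 : (-1:ℚ)^0 * (((ℓ+1).choose 0 : ℕ) : ℚ) * B (x + ((0:ℕ):ℚ)) n = g 0 := by
        simp [hg]
      rw [hlast, Finset.sum_range_succ g (ℓ+1), hz, h0]
      ring
    rw [hsplit]
    simp only [hg]
    rw [ih x, ih (x+1)]
    have hgoal : (if ℓ ≤ n then B x (n - ℓ) else 0) - (if ℓ ≤ n then B (x+1) (n - ℓ) else 0)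
        = -(if ℓ + 1 ≤ n then B x (n - (ℓ+1)) else 0) := by
      rcases lt_trichotomy ℓ n with h | h | h
      · have h1 : ℓ ≤ n := h.le
        have h2 : ℓ + 1 ≤ n := h
        simp only [if_pos h1, if_pos h2]
        rw [show n - ℓ = (n - (ℓ+1)) + 1 from by omega, ← B_pascal x (n - (ℓ+1))]
        ring
      · subst h
        simp [B]
      · simp only [if_neg (show ¬ ℓ ≤ n by omega), if_neg (show ¬ ℓ + 1 ≤ n by omega)]
        simp
    linear_combination ((-1:ℚ))^ℓ * hgoal

lemma gchoose_natCast_nonneg (x : ℤ) (k : ℕ) : gchoose x (k : ℤ) = B (x : ℚ) k := by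
  unfold gchoose B
  rw [if_neg (by exact_mod_cast Int.not_lt.mpr (Int.natCast_nonneg k))]
  simp

lemma gchoose_nat (ℓ j : ℕ) : gchoose (ℓ : ℤ) (j : ℤ) = (ℓ.choose j : ℚ) := by
  rw [gchoose_natCast_nonneg]
  unfold B
  rcases le_or_gt j ℓ with h | h
  · have hd : (ℓ.descFactorial j : ℚ) = ∏ i ∈ Finset.range j, ((ℓ:ℚ) - i) := by
      rw [Nat.descFactorial_eq_prod_range]
      push_cast
      refine Finset.prod_congr rfl fun i hi => ?_
      have : i ≤ ℓ := le_trans (Nat.le_of_lt_succ (Nat.lt_succ_of_lt (Finset.mem_range.mp hi))) h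
      rw [Nat.cast_sub this]
    push_cast
    rw [← hd, Nat.descFactorial_eq_factorial_mul_choose]
    have h3 : ((Nat.factorial j : ℕ) : ℚ) ≠ 0 := by
      exact_mod_cast Nat.cast_ne_zero.mpr (Nat.factorial_ne_zero j)
    push_cast
    field_simp
  · push_cast
    rw [Nat.choose_eq_zero_of_lt h]
    rw [Finset.prod_eq_zero (Finset.mem_range.mpr h) (by simp)]
    simp

theorem stmt_3 (ℓ m s n : ℕ) :
    ∑ k ∈ Finset.Icc (-(m : ℤ)) ((ℓ : ℤ) - (m : ℤ)),
      (-1 : ℚ) ^ k * (gchoose (ℓ : ℤ) ((m : ℤ) + k)) * (gchoose ((s : ℤ) + k) (n : ℤ))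
      = (-1 : ℚ) ^ (ℓ + m) * gchoose ((s : ℤ) - (m : ℤ)) ((n : ℤ) - (ℓ : ℤ)) := by
  have hsign : ∀ j : ℕ, (-1:ℚ) ^ ((j:ℤ) - (m:ℤ)) = (-1:ℚ)^j * (-1:ℚ)^m := by
    intro j
    rw [zpow_sub₀ (by norm_num : (-1:ℚ) ≠ 0), zpow_natCast, zpow_natCast,
      div_eq_mul_inv, ← inv_pow, show ((-1:ℚ))⁻¹ = -1 from by norm_num]
  have hre :
      ∑ k ∈ Finset.Icc (-(m : ℤ)) ((ℓ : ℤ) - (m : ℤ)),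
        (-1 : ℚ) ^ k * (gchoose (ℓ : ℤ) ((m : ℤ) + k)) * (gchoose ((s : ℤ) + k) (n : ℤ))
      = ∑ a ∈ Finset.range (ℓ + 1),
        (-1:ℚ)^m * ((-1:ℚ)^a * (ℓ.choose a : ℚ) * B (((s:ℚ) - (m:ℚ)) + a) n) := by
    refine Finset.sum_nbij' (fun k => (k + m).toNat) (fun a => (a:ℤ) - m) ?_ ?_ ?_ ?_ ?_
    · intro k hk
      simp only [Finset.mem_Icc] at hk
      simp only [Finset.mem_range]
      omega
    · intro a ha
      simp only [Finset.mem_range] at ha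
      simp only [Finset.mem_Icc]
      omega
    · intro k hk
      simp only [Finset.mem_Icc] at hk
      show ((k + (m:ℤ)).toNat : ℤ) - m = k
      omega
    · intro a ha
      simp only [Finset.mem_range] at ha
      show (((a:ℤ) - m + m).toNat) = a
      omega
    · intro k hk
      simp only [Finset.mem_Icc] at hk
      have hka : (((k + m).toNat : ℕ) : ℤ) = k + m := Int.toNat_of_nonneg (by omega)
      set a : ℕ := (k + m).toNat with hadef
      have h1 : (m:ℤ) + k = (a:ℤ) := by omega
      have h2 : (-1:ℚ)^k = (-1:ℚ)^a * (-1:ℚ)^m := by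
        rw [show k = (a:ℤ) - (m:ℤ) from by omega, hsign]
      have h3 : gchoose ((s:ℤ) + k) (n:ℤ) = B (((s:ℚ) - (m:ℚ)) + a) n := by
        rw [gchoose_natCast_nonneg]
        congr 1
        have : (s:ℤ) + k = (s:ℤ) - m + a := by omega
        rw [this]
        push_cast
        ring
      rw [h1, h2, h3, gchoose_nat]
      ring
  rw [hre, ← Finset.mul_sum, key n ℓ ((s:ℚ) - (m:ℚ))]
  have hrhs : gchoose ((s:ℤ) - (m:ℤ)) ((n:ℤ) - (ℓ:ℤ))
      = (if ℓ ≤ n then B ((s:ℚ) - (m:ℚ)) (n - ℓ) else 0) := by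
    rcases le_or_gt ℓ n with h | h
    · rw [if_pos h, show (n:ℤ) - (ℓ:ℤ) = ((n - ℓ : ℕ) : ℤ) from by omega,
        gchoose_natCast_nonneg]
      congr 1
      push_cast
      ring
    · rw [if_neg (by omega)]
      unfold gchoose
      rw [if_pos (by omega)]
  rw [hrhs, pow_add]
  ring
end

section
/- Let p ≥ 5 be a prime. Then ∑_{a,b ∈ F_p} ( ∑_{x ∈ F_p} χ(x³ − a·x − b) )² = p³ − p², where χ is the Legendre symbol (quadratic character) on F_p extended by χ(0)=0. -/
open Classical

/-- The quadratic character (Legendre symbol) on `ZMod p`, valued in `ℤ`,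
    with `χ 0 = 0`, `χ u = 1` for nonzero squares and `χ u = -1` otherwise. -/
noncomputable def legendreChar (p : ℕ) (x : ZMod p) : ℤ :=
  if x = 0 then 0 else if IsSquare x then 1 else -1

section Aux

open Finset

variable {F : Type*} [Field F] [Fintype F] [DecidableEq F]

lemma aux_sum_shift (hF : ringChar F ≠ 2) {c : F} (hc : c ≠ 0) :
    ∑ b : F, quadraticChar F b * quadraticChar F (b + c) = -1 := by
  have key : ∀ b : F, b ≠ 0 → quadraticChar F b * quadraticChar F (b + c)
      = quadraticChar F (1 + c * b⁻¹) := by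
    intro b hb
    have hbc : b + c = b * (1 + c * b⁻¹) := by field_simp
    rw [hbc, map_mul, ← mul_assoc, ← sq, quadraticChar_sq_one hb, one_mul]
  have h0 : ∑ b : F, quadraticChar F b * quadraticChar F (b + c)
      = ∑ b ∈ Finset.univ.erase (0 : F), quadraticChar F b * quadraticChar F (b + c) := by
    rw [← Finset.add_sum_erase _ _ (Finset.mem_univ (0 : F))]
    simp
  rw [h0, Finset.sum_congr rfl fun b hb => key b (Finset.ne_of_mem_erase hb)]
  have hbij : ∑ b ∈ Finset.univ.erase (0 : F), quadraticChar F (1 + c * b⁻¹)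
      = ∑ z ∈ Finset.univ.erase (1 : F), quadraticChar F z := by
    refine Finset.sum_nbij' (fun b => 1 + c * b⁻¹) (fun z => c * (z - 1)⁻¹) ?_ ?_ ?_ ?_ ?_
    · intro b hb
      have hb0 : b ≠ 0 := Finset.ne_of_mem_erase hb
      have : c * b⁻¹ ≠ 0 := mul_ne_zero hc (inv_ne_zero hb0)
      simp only [Finset.mem_erase, Finset.mem_univ, and_true]
      intro h
      exact this (by linear_combination h)
    · intro z hz
      have hz1 : z ≠ 1 := Finset.ne_of_mem_erase hz
      have : (z - 1) ≠ 0 := sub_ne_zero.mpr hz1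
      simp only [Finset.mem_erase, Finset.mem_univ, and_true]
      exact mul_ne_zero hc (inv_ne_zero this)
    · intro b hb
      have hb0 : b ≠ 0 := Finset.ne_of_mem_erase hb
      field_simp
      simp [hc]
    · intro z hz
      have hz1 : z ≠ 1 := Finset.ne_of_mem_erase hz
      have : (z - 1) ≠ 0 := sub_ne_zero.mpr hz1
      field_simp
      ring
    · intro b hb; rfl
  rw [hbij, Finset.sum_erase_eq_sub (Finset.mem_univ (1 : F)),
    quadraticChar_sum_zero hF, map_one]
  ring

lemma aux_sum_two (hF : ringChar F ≠ 2) (u v : F) :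
    ∑ b : F, quadraticChar F (u - b) * quadraticChar F (v - b)
      = if u = v then (Fintype.card F : ℤ) - 1 else -1 := by
  have hre : ∑ b : F, quadraticChar F (u - b) * quadraticChar F (v - b)
      = ∑ b : F, quadraticChar F b * quadraticChar F (b + (v - u)) := by
    refine Fintype.sum_equiv (Equiv.subLeft u) _ _ fun b => ?_
    simp only [Equiv.subLeft_apply]
    have e : u - b + (v - u) = v - b := by ring
    rw [e]
  rw [hre]
  by_cases huv : u = v
  · subst huv
    simp only [if_pos rfl, sub_self, add_zero]
    have : ∀ b : F, quadraticChar F b * quadraticChar F b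
        = if b = 0 then (0 : ℤ) else 1 := by
      intro b
      by_cases hb : b = 0
      · simp [hb]
      · rw [if_neg hb, ← sq, quadraticChar_sq_one hb]
    rw [Finset.sum_congr rfl fun b _ => this b]
    have : ∀ b : F, (if b = 0 then (0 : ℤ) else 1)
        = 1 - (if b = 0 then (1 : ℤ) else 0) := by
      intro b; split <;> ring
    rw [Finset.sum_congr rfl fun b _ => this b, Finset.sum_sub_distrib,
      Finset.sum_const, Finset.sum_ite_eq' Finset.univ (0 : F) (fun _ => (1 : ℤ))]
    simp
  · rw [if_neg huv]
    exact aux_sum_shift hF (sub_ne_zero.mpr fun h => huv h.symm)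

end Aux

theorem stmt_10 (p : ℕ) [Fact p.Prime] (hp5 : 5 ≤ p) :
    ∑ a : ZMod p, ∑ b : ZMod p,
      (∑ x : ZMod p, legendreChar p (x ^ 3 - a * x - b)) ^ 2
      = (p : ℤ) ^ 3 - (p : ℤ) ^ 2 := by
  have hchar : ringChar (ZMod p) ≠ 2 := by
    rw [ZMod.ringChar_zmod_n]; omega
  have hcard : Fintype.card (ZMod p) = p := ZMod.card p
  set χ := quadraticChar (ZMod p) with hχ
  have hL : ∀ x : ZMod p, legendreChar p x = χ x := by
    intro x
    rw [hχ, quadraticChar_apply]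
    unfold legendreChar quadraticCharFun
    split_ifs <;> rfl
  -- inner sums over b, for fixed a, x, y
  have hb : ∀ a x y : ZMod p,
      ∑ b : ZMod p, χ (x ^ 3 - a * x - b) * χ (y ^ 3 - a * y - b)
        = if x ^ 3 - a * x = y ^ 3 - a * y then (p : ℤ) - 1 else -1 := by
    intro a x y
    have := aux_sum_two hchar (x ^ 3 - a * x) (y ^ 3 - a * y)
    rw [hcard] at this
    rw [hχ]
    simpa [sub_sub] using this
  have h1 : ∀ a : ZMod p,
      ∑ b : ZMod p, (∑ x : ZMod p, χ (x ^ 3 - a * x - b)) ^ 2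
        = ∑ x : ZMod p, ∑ y : ZMod p,
            (if x ^ 3 - a * x = y ^ 3 - a * y then (p : ℤ) - 1 else -1) := by
    intro a
    calc ∑ b : ZMod p, (∑ x : ZMod p, χ (x ^ 3 - a * x - b)) ^ 2
        = ∑ b : ZMod p, ∑ x : ZMod p, ∑ y : ZMod p,
            χ (x ^ 3 - a * x - b) * χ (y ^ 3 - a * y - b) := by
          refine Finset.sum_congr rfl fun b _ => ?_
          rw [sq, Finset.sum_mul_sum]
      _ = ∑ x : ZMod p, ∑ b : ZMod p, ∑ y : ZMod p,
            χ (x ^ 3 - a * x - b) * χ (y ^ 3 - a * y - b) := Finset.sum_comm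
      _ = ∑ x : ZMod p, ∑ y : ZMod p, ∑ b : ZMod p,
            χ (x ^ 3 - a * x - b) * χ (y ^ 3 - a * y - b) :=
          Finset.sum_congr rfl fun x _ => Finset.sum_comm
      _ = _ := Finset.sum_congr rfl fun x _ => Finset.sum_congr rfl fun y _ => hb a x y
  -- sum over a, for fixed x, y
  have h2 : ∀ x y : ZMod p,
      ∑ a : ZMod p, (if x ^ 3 - a * x = y ^ 3 - a * y then (p : ℤ) - 1 else -1)
        = if x = y then (p : ℤ) * ((p : ℤ) - 1) else 0 := by
    intro x y
    by_cases hxy : x = y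
    · subst hxy
      rw [if_pos rfl]
      simp [Finset.sum_const, Finset.card_univ, hcard]
      ring
    · rw [if_neg hxy]
      have hsub : x - y ≠ 0 := sub_ne_zero.mpr hxy
      have key : ∀ a : ZMod p,
          (x ^ 3 - a * x = y ^ 3 - a * y) ↔ a = (x ^ 3 - y ^ 3) / (x - y) := by
        intro a
        rw [eq_div_iff hsub]
        constructor
        · intro h; linear_combination -h
        · intro h; linear_combination -h
      set a₀ := (x ^ 3 - y ^ 3) / (x - y)
      have step : ∀ a : ZMod p,
          (if x ^ 3 - a * x = y ^ 3 - a * y then (p : ℤ) - 1 else -1)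
            = (if a = a₀ then (p : ℤ) else 0) - 1 := by
        intro a
        simp only [key a]
        split <;> ring
      rw [Finset.sum_congr rfl fun a _ => step a, Finset.sum_sub_distrib,
        Finset.sum_ite_eq' Finset.univ a₀ (fun _ => (p : ℤ))]
      simp [Finset.card_univ, hcard]
  calc ∑ a : ZMod p, ∑ b : ZMod p,
        (∑ x : ZMod p, legendreChar p (x ^ 3 - a * x - b)) ^ 2
      = ∑ a : ZMod p, ∑ x : ZMod p, ∑ y : ZMod p,
          (if x ^ 3 - a * x = y ^ 3 - a * y then (p : ℤ) - 1 else -1) := by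
        refine Finset.sum_congr rfl fun a _ => ?_
        rw [← h1 a]
        exact Finset.sum_congr rfl fun b _ => by
          rw [Finset.sum_congr rfl fun x _ => hL (x ^ 3 - a * x - b)]
    _ = ∑ x : ZMod p, ∑ a : ZMod p, ∑ y : ZMod p,
          (if x ^ 3 - a * x = y ^ 3 - a * y then (p : ℤ) - 1 else -1) := Finset.sum_comm
    _ = ∑ x : ZMod p, ∑ y : ZMod p, ∑ a : ZMod p,
          (if x ^ 3 - a * x = y ^ 3 - a * y then (p : ℤ) - 1 else -1) :=
        Finset.sum_congr rfl fun x _ => Finset.sum_comm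
    _ = ∑ x : ZMod p, ∑ y : ZMod p, (if x = y then (p : ℤ) * ((p : ℤ) - 1) else 0) :=
        Finset.sum_congr rfl fun x _ => Finset.sum_congr rfl fun y _ => h2 x y
    _ = ∑ x : ZMod p, (p : ℤ) * ((p : ℤ) - 1) := by
        refine Finset.sum_congr rfl fun x _ => ?_
        simp [Finset.sum_ite_eq]
    _ = (p : ℤ) ^ 3 - (p : ℤ) ^ 2 := by
        rw [Finset.sum_const, Finset.card_univ, hcard, nsmul_eq_mul]; ring
end
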